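/- Let χ, ψ be Dirichlet characters of the same modulus q such that χψ is primitive. Then the Jacobi sum satisfies J(χ, ψ) = τ(χ)τ(ψ)/τ(χψ), where J(χ, ψ) = ∑_{a mod q} χ(a) ψ(1 − a). -/

import Mathlib

/-- e(x) = exp(2πix). -/
noncomputable def eC (x : ℂ) : ℂ := Complex.exp (2 * Real.pi * Complex.I * x)

/-- The Gauss sum τ(χ) = ∑_{b mod q} χ(b) e(b/q). -/
noncomputable def gaussSum' {q : ℕ} [NeZero q] (χ : DirichletCharacter ℂ q) : ℂ :=
  ∑ b : ZMod q, χ b * eC ((b.val : ℂ) / (q : ℂ))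

/-- The Jacobi sum J(χ, ψ) = ∑_{a mod q} χ(a) ψ(1 − a). -/
noncomputable def jacobiSum' {q : ℕ} [NeZero q] (χ ψ : DirichletCharacter ℂ q) : ℂ :=
  ∑ a : ZMod q, χ a * ψ (1 - a)

open ZMod Finset in
/-- The Gauss sum (w.r.t. the standard additive character) of a primitive Dirichlet
character is nonzero. -/
lemma JacobiAux.tau_ne_zero {q : ℕ} [NeZero q] {χ : DirichletCharacter ℂ q}
    (h : χ.IsPrimitive) : gaussSum χ ZMod.stdAddChar ≠ 0 := by
  intro h0
  have h1 : 𝓕 ⇑χ = 0 := by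
    ext k
    rw [DirichletCharacter.IsPrimitive.fourierTransform_eq_inv_mul_gaussSum h, h0, mul_zero]
    rfl
  have h2 : ⇑χ = 0 := by
    have := (ZMod.dft (N := q) (E := ℂ)).injective (a₁ := ⇑χ) (a₂ := 0)
    simp only [map_zero] at this
    exact this h1
  have := congrFun h2 1
  simp at this

/-- `gaussSum'` is the Gauss sum with respect to the standard additive character. -/
lemma JacobiAux.gaussSum'_eq {q : ℕ} [NeZero q] (χ : DirichletCharacter ℂ q) :
    gaussSum' χ = gaussSum χ ZMod.stdAddChar := by
  unfold gaussSum' gaussSum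
  refine Finset.sum_congr rfl fun b _ => ?_
  rw [ZMod.stdAddChar_apply, ZMod.toCircle_apply, eC, mul_div_assoc]

lemma JacobiAux.aux_one_sub {q : ℕ} (d : ZMod q) (hd2 : IsUnit (1 + d)) :
    1 - Ring.inverse (1 + d) = d * Ring.inverse (1 + d) := by
  have h := Ring.mul_inverse_cancel _ hd2
  linear_combination -h

lemma JacobiAux.aux_one_add {q : ℕ} (a : ZMod q) (ha : IsUnit a) :
    1 + Ring.inverse a * (1 - a) = Ring.inverse a := by
  have h := Ring.inverse_mul_cancel _ ha
  linear_combination -h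

open ZMod Finset JacobiAux in
/-- Reindexing: `∑ ψ(d) (χψ)⁻¹(1+d) = J(χ, ψ)` via `d ↦ (1+d)⁻¹`. -/
lemma JacobiAux.key {q : ℕ} [NeZero q] (χ ψ : DirichletCharacter ℂ q) :
    ∑ d : ZMod q, ψ d * (χ * ψ)⁻¹ (1 + d) = ∑ a : ZMod q, χ a * ψ (1 - a) := by
  have h1 : ∑ d ∈ univ.filter (fun d : ZMod q => IsUnit d ∧ IsUnit (1 + d)),
      ψ d * (χ * ψ)⁻¹ (1 + d) = ∑ d : ZMod q, ψ d * (χ * ψ)⁻¹ (1 + d) :=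
    Finset.sum_filter_of_ne (fun d _ hne =>
      ⟨by_contra fun h => hne (by rw [ψ.map_nonunit h, zero_mul]),
       by_contra fun h => hne (by rw [(χ * ψ)⁻¹.map_nonunit h, mul_zero])⟩)
  have h2 : ∑ a ∈ univ.filter (fun a : ZMod q => IsUnit a ∧ IsUnit (1 - a)),
      χ a * ψ (1 - a) = ∑ a : ZMod q, χ a * ψ (1 - a) :=
    Finset.sum_filter_of_ne (fun a _ hne =>
      ⟨by_contra fun h => hne (by rw [χ.map_nonunit h, zero_mul]),
       by_contra fun h => hne (by rw [ψ.map_nonunit h, mul_zero])⟩)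
  rw [← h1, ← h2]
  refine Finset.sum_nbij' (fun d => Ring.inverse (1 + d)) (fun a => Ring.inverse a * (1 - a))
    ?_ ?_ ?_ ?_ ?_
  · intro d hd
    simp only [mem_filter, mem_univ, true_and] at hd ⊢
    obtain ⟨hd1, hd2⟩ := hd
    exact ⟨isUnit_ringInverse.mpr hd2,
      (aux_one_sub d hd2) ▸ hd1.mul (isUnit_ringInverse.mpr hd2)⟩
  · intro a ha
    simp only [mem_filter, mem_univ, true_and] at ha ⊢
    obtain ⟨ha1, ha2⟩ := ha
    refine ⟨(isUnit_ringInverse.mpr ha1).mul ha2, ?_⟩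
    rw [aux_one_add a ha1]
    exact isUnit_ringInverse.mpr ha1
  · intro d hd
    simp only [mem_filter, mem_univ, true_and] at hd
    obtain ⟨hd1, hd2⟩ := hd
    show Ring.inverse (Ring.inverse (1 + d)) * (1 - Ring.inverse (1 + d)) = d
    rw [aux_one_sub d hd2, ← hd2.unit_spec, Ring.inverse_unit, Ring.inverse_unit, inv_inv]
    have huv : (↑hd2.unit : ZMod q) * ↑hd2.unit⁻¹ = 1 := hd2.unit.mul_inv
    linear_combination d * huv
  · intro a ha
    simp only [mem_filter, mem_univ, true_and] at ha
    obtain ⟨ha1, ha2⟩ := ha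
    show Ring.inverse (1 + Ring.inverse a * (1 - a)) = a
    rw [aux_one_add a ha1, ← ha1.unit_spec, Ring.inverse_unit, Ring.inverse_unit, inv_inv]
  · intro d hd
    simp only [mem_filter, mem_univ, true_and] at hd
    obtain ⟨hd1, hd2⟩ := hd
    rw [aux_one_sub d hd2, map_mul, ← MulChar.inv_apply χ, ← MulChar.inv_apply ψ,
      mul_inv, MulChar.mul_apply]
    ring

open ZMod Finset in
lemma JacobiAux.prod_eq {q : ℕ} [NeZero q] (χ ψ : DirichletCharacter ℂ q)
    (hprim : (χ * ψ).IsPrimitive) :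
    gaussSum χ ZMod.stdAddChar * gaussSum ψ ZMod.stdAddChar =
      (∑ d : ZMod q, ψ d * (χ * ψ)⁻¹ (1 + d)) * gaussSum (χ * ψ) ZMod.stdAddChar := by
  set e := (ZMod.stdAddChar (N := q)) with he
  calc gaussSum χ e * gaussSum ψ e
      = ∑ b : ZMod q, ∑ c : ZMod q, (χ b * e b) * (ψ c * e c) := by
        rw [gaussSum, gaussSum, Finset.sum_mul_sum]
    _ = ∑ b : ZMod q, ∑ d : ZMod q, ((χ * ψ) b * ψ d) * e (b * (1 + d)) := by
        refine Finset.sum_congr rfl fun b _ => ?_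
        by_cases hb : IsUnit b
        · rw [← Function.Bijective.sum_comp (Units.mulLeft_bijective hb.unit)
            (fun c => (χ b * e b) * (ψ c * e c))]
          refine Finset.sum_congr rfl fun d _ => ?_
          have hb' : (↑hb.unit : ZMod q) = b := hb.unit_spec
          have harg : b + b * d = b * (1 + d) := by ring
          rw [hb', map_mul ψ, ← harg, AddChar.map_add_eq_mul, MulChar.mul_apply]
          ring
        · simp [χ.map_nonunit hb, MulChar.mul_apply, ψ.map_nonunit, (χ * ψ).map_nonunit hb]
    _ = ∑ d : ZMod q, ∑ b : ZMod q, ((χ * ψ) b * ψ d) * e (b * (1 + d)) := Finset.sum_comm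
    _ = ∑ d : ZMod q, ψ d * gaussSum (χ * ψ) (e.mulShift (1 + d)) := by
        refine Finset.sum_congr rfl fun d _ => ?_
        rw [gaussSum, Finset.mul_sum]
        refine Finset.sum_congr rfl fun b _ => ?_
        rw [AddChar.mulShift_apply, mul_comm (1 + d) b]
        ring
    _ = ∑ d : ZMod q, ψ d * ((χ * ψ)⁻¹ (1 + d) * gaussSum (χ * ψ) e) := by
        refine Finset.sum_congr rfl fun d _ => ?_
        rw [gaussSum_mulShift_of_isPrimitive _ hprim]
    _ = (∑ d : ZMod q, ψ d * (χ * ψ)⁻¹ (1 + d)) * gaussSum (χ * ψ) e := by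
        rw [Finset.sum_mul]
        exact Finset.sum_congr rfl fun d _ => by ring

/-- Relation (2.6) between Jacobi sums and Gauss sums. -/
theorem jacobiSum_eq_gauss_div (q : ℕ) [NeZero q] (χ ψ : DirichletCharacter ℂ q)
    (hprim : (χ * ψ).IsPrimitive) :
    jacobiSum' χ ψ = gaussSum' χ * gaussSum' ψ / gaussSum' (χ * ψ) := by
  rw [JacobiAux.gaussSum'_eq, JacobiAux.gaussSum'_eq, JacobiAux.gaussSum'_eq,
    eq_div_iff (JacobiAux.tau_ne_zero hprim), JacobiAux.prod_eq χ ψ hprim, jacobiSum',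
    JacobiAux.key χ ψ]
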